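/- Linear attention fails on 2-repetitive MQAR with ε-JL keys when ε = ω(1/N): for any ε > 0 and unit keys k₁, k₂ with ⟨k₁, k₂⟩ = ε and orthonormal one-hot values v₁, v₂, there exists a stream of length N ≤ ⌈1/ε⌉ + 2 of pairs from {(k₁,v₁), (k₂,v₂)} such that the decoded output on query k₁ is v₂ rather than v₁. -/

import Mathlib

open Matrix

/-- Linear attention fails on 2-repetitive MQAR with ε-JL keys: for any `ε ∈ (0,1)`,
unit keys `k₁, k₂` with `⟨k₁,k₂⟩ = ε` and orthonormal values `v₁, v₂`, there is a
stream of length `N ≤ ⌈1/ε⌉ + 2` of pairs from `{(k₁,v₁),(k₂,v₂)}` containing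
`(k₁,v₁)` such that argmax decoding on query `k₁` prefers `v₂` over `v₁`. -/
theorem stmt_7 (d : ℕ) (k₁ k₂ v₁ v₂ : Fin d → ℝ) (ε : ℝ)
    (hε0 : 0 < ε) (hε1 : ε < 1)
    (hk₁ : k₁ ⬝ᵥ k₁ = 1) (hk₂ : k₂ ⬝ᵥ k₂ = 1) (hk₁₂ : k₁ ⬝ᵥ k₂ = ε)
    (hv₁ : v₁ ⬝ᵥ v₁ = 1) (hv₂ : v₂ ⬝ᵥ v₂ = 1) (hv₁₂ : v₁ ⬝ᵥ v₂ = 0) :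
    ∃ N : ℕ, N ≤ ⌈1/ε⌉₊ + 2 ∧
      ∃ σ : Fin N → Fin 2,
        (∃ t : Fin N, σ t = 0) ∧
        (v₁ ⬝ᵥ Matrix.vecMul k₁
            (∑ t : Fin N, Matrix.vecMulVec (![k₁, k₂] (σ t)) (![v₁, v₂] (σ t))) <
         v₂ ⬝ᵥ Matrix.vecMul k₁
            (∑ t : Fin N, Matrix.vecMulVec (![k₁, k₂] (σ t)) (![v₁, v₂] (σ t)))) := by
  set m : ℕ := ⌈1/ε⌉₊ + 1 with hm
  refine ⟨m + 1, by omega, fun i => if i = 0 then 0 else 1, ⟨0, by simp⟩, ?_⟩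
  have hsum : (∑ t : Fin (m+1), Matrix.vecMulVec (![k₁, k₂] (if t = 0 then 0 else 1))
      (![v₁, v₂] (if t = 0 then 0 else 1)))
      = Matrix.vecMulVec k₁ v₁ + m • Matrix.vecMulVec k₂ v₂ := by
    rw [Fin.sum_univ_succ]
    simp [Fin.succ_ne_zero]
  rw [hsum]
  have key : ∀ w : Fin d → ℝ,
      w ⬝ᵥ Matrix.vecMul k₁ (Matrix.vecMulVec k₁ v₁ + m • Matrix.vecMulVec k₂ v₂)
      = (k₁ ⬝ᵥ k₁) * (v₁ ⬝ᵥ w) + m * ((k₁ ⬝ᵥ k₂) * (v₂ ⬝ᵥ w)) := by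
    intro w
    have expand : ∀ v u q : Fin d → ℝ,
        Matrix.vecMul q (Matrix.vecMulVec v u) = (q ⬝ᵥ v) • u := by
      intro v u q
      ext j
      simp [Matrix.vecMul, Matrix.vecMulVec, dotProduct, Finset.sum_mul, mul_assoc]
    have smulM : ∀ (M : Matrix (Fin d) (Fin d) ℝ) (q : Fin d → ℝ),
        Matrix.vecMul q (m • M) = m • Matrix.vecMul q M := by
      intro M q
      ext j
      simp only [Matrix.vecMul, dotProduct, Matrix.smul_apply, Pi.smul_apply, smul_eq_mul]
      rw [Finset.smul_sum]
      exact Finset.sum_congr rfl fun i _ => (mul_smul_comm _ _ _)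
    rw [Matrix.vecMul_add, smulM, dotProduct_add, expand, expand,
      dotProduct_smul, dotProduct_smul, dotProduct_smul]
    simp only [smul_eq_mul, nsmul_eq_mul, dotProduct_comm w v₁, dotProduct_comm w v₂]
  have h1 := key v₁
  have h2 := key v₂
  simp only [dotProduct_comm v₂ v₁, hv₁₂, hv₂, hk₁, hk₁₂, hv₁] at h1 h2
  rw [h1, h2]
  have hle : (1:ℝ)/ε ≤ ⌈1/ε⌉₊ := Nat.le_ceil _
  have hmε : (1:ℝ)/ε < m := by rw [hm]; push_cast; linarith
  calc (1:ℝ) * 1 + ↑m * (ε * 0) = (1/ε) * ε := by field_simp; ring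
    _ < m * ε := mul_lt_mul_of_pos_right hmε hε0
    _ = (1:ℝ) * 0 + ↑m * (ε * 1) := by ring
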